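/- Let R be a commutative reduced clean ring and f : R[x] → R[x] a surjective ring homomorphism. Then the induced map φ₁₁ : R → R, given by φ₁₁(r) = f(r) (which lies in R), is a surjective ring homomorphism from R onto R. -/

import Mathlib

open Polynomial

theorem aux_unit_const {R : Type*} [CommRing R] [IsReduced R] (p : R[X]) (h : IsUnit p) :
    p = C (p.coeff 0) := by
  obtain ⟨-, hnil⟩ := Polynomial.coeff_isUnit_isNilpotent_of_isUnit h
  ext n
  rcases eq_or_ne n 0 with rfl | hn
  · simp
  · rw [coeff_C, if_neg hn]
    exact IsReduced.eq_zero _ (hnil n hn)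

theorem aux_idem_const {R : Type*} [CommRing R] [IsReduced R] (p : R[X])
    (h : IsIdempotentElem p) : p = C (p.coeff 0) := by
  have hd : p.natDegree = 0 := by
    by_contra hdeg
    have h1 : p.leadingCoeff * p.leadingCoeff = 0 := by
      have := Polynomial.coeff_mul_degree_add_degree p p
      rw [h.eq, coeff_eq_zero_of_natDegree_lt ?_] at this
      · exact this.symm
      · omega
    have : p.leadingCoeff = 0 := IsReduced.eq_zero _ ⟨2, by rw [pow_two]; exact h1⟩
    rw [leadingCoeff_eq_zero] at this
    exact hdeg (by simp [this])
  exact Polynomial.eq_C_of_natDegree_eq_zero hd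

open Polynomial in
theorem stmt_16 {R : Type*} [CommRing R] [IsReduced R]
    (hclean : ∀ a : R, ∃ u e : R, IsUnit u ∧ IsIdempotentElem e ∧ a = u + e)
    (f : R[X] →+* R[X]) (hf : Function.Surjective f) :
    ∃ g : R →+* R, Function.Surjective g ∧ ∀ r : R, f (C r) = C (g r) := by
  set g : R →+* R := (constantCoeff : R[X] →+* R).comp (f.comp (C : R →+* R[X])) with hg
  have hconst : ∀ r : R, f (C r) = C (g r) := by
    intro r
    obtain ⟨u, e, hu, he, hr⟩ := hclean r
    have h1 : f (C u) = C ((f (C u)).coeff 0) := aux_unit_const _ ((hu.map C).map f)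
    have h2 : f (C e) = C ((f (C e)).coeff 0) :=
      aux_idem_const _ (by
        show f (C e) * f (C e) = f (C e)
        rw [← map_mul, ← map_mul, he.eq])
    have h3 : f (C r) = C ((f (C u)).coeff 0 + (f (C e)).coeff 0) := by
      rw [hr, map_add, map_add, h1, h2, map_add]; simp
    rw [h3]
    congr 1
    have : g r = (f (C r)).coeff 0 := rfl
    rw [this, h3]
    simp
  refine ⟨g, ?_, hconst⟩
  intro s
  obtain ⟨p, hp⟩ := hf (C s)
  obtain ⟨p₁, hp₁⟩ := hf X
  refine ⟨p.coeff 0, ?_⟩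
  have hzero : s - g (p.coeff 0) = 0 := by
    refine IsReduced.eq_zero _ (nilpotent_iff_mem_prime.mpr ?_)
    intro J hJ
    haveI := hJ
    set mk := Ideal.Quotient.mk J with hmk
    set φ := Polynomial.mapRingHom mk with hφ
    set q : (R ⧸ J)[X] := φ (f X) with hq
    have hkey : ∀ p' : R[X], φ (f p') = (p'.map (mk.comp g)).comp q := by
      have : φ.comp f = Polynomial.eval₂RingHom ((C : (R ⧸ J) →+* (R ⧸ J)[X]).comp (mk.comp g)) q := by
        apply Polynomial.ringHom_ext
        · intro a
          simp only [RingHom.comp_apply, coe_eval₂RingHom, eval₂_C]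
          rw [hconst a]
          simp [hφ]
        · simp [coe_eval₂RingHom]
          rfl
      intro p'
      have := congrArg (fun h : R[X] →+* (R ⧸ J)[X] => h p') this
      simp only [RingHom.comp_apply] at this
      rw [this]
      rw [Polynomial.comp, Polynomial.eval₂_map]
      simp [coe_eval₂RingHom]
    have hq1 : q.natDegree = 1 := by
      have h1 : ((p₁.map (mk.comp g)).comp q).natDegree = 1 := by
        rw [← hkey, hp₁]; simp [hφ]
      rw [Polynomial.natDegree_comp] at h1
      exact Nat.eq_one_of_mul_eq_one_left h1
    have h2 : φ (f p) = (p.map (mk.comp g)).comp q := hkey p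
    rw [hp] at h2
    rw [show φ (C s) = C (mk s) from by simp [hφ]] at h2
    have hdeg : (p.map (mk.comp g)).natDegree = 0 := by
      have := congrArg Polynomial.natDegree h2
      rw [Polynomial.natDegree_comp, hq1, mul_one, natDegree_C] at this
      exact this.symm
    have h3 : (C (mk s) : (R ⧸ J)[X]) = C ((p.map (mk.comp g)).coeff 0) := by
      rw [Polynomial.eq_C_of_natDegree_eq_zero hdeg] at h2
      rw [Polynomial.C_comp] at h2
      simpa [hφ] using h2
    have h4 : mk s = mk (g (p.coeff 0)) := by
      have := Polynomial.C_injective h3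
      rwa [Polynomial.coeff_map, RingHom.comp_apply] at this
    rw [← Ideal.Quotient.eq_zero_iff_mem, map_sub, h4, sub_self]
  have := sub_eq_zero.mp hzero
  exact this.symm
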